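/- If a graph G is k-regular and dispersable (i.e., mbt(G) = Δ(G) = k), then G is bipartite. -/

import Mathlib

open SimpleGraph
open scoped Classical

/-- A matching book embedding of `G` in `k` pages: a linear order (spine) on the
vertices together with a page assignment for the edges such that each page is a
matching (every vertex has degree at most one per page) and edges on the same
page do not cross with respect to the spine order. -/
structure MatchingBookEmbedding {V : Type*} [Fintype V] (G : SimpleGraph V) (k : ℕ) where
  ord : V ≃ Fin (Fintype.card V)
  page : G.edgeSet → Fin k
  matching : ∀ e f : G.edgeSet, e ≠ f → page e = page f →
    ∀ v : V, v ∈ (e : Sym2 V) → v ∉ (f : Sym2 V)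
  noncross : ∀ e f : G.edgeSet, page e = page f →
    ∀ a b c d : V, (e : Sym2 V) = s(a, b) → (f : Sym2 V) = s(c, d) →
      ord a < ord c → ord c < ord b → ord b < ord d → False

/-- The matching book thickness: the minimum number of pages over all matching
book embeddings. -/
noncomputable def mbt {V : Type*} [Fintype V] (G : SimpleGraph V) : ℕ :=
  sInf {k | Nonempty (MatchingBookEmbedding G k)}

section Aux

variable {V : Type*} [Fintype V] {G : SimpleGraph V} {k : ℕ}

/-- At a given vertex, there is at most one edge on each page. -/
lemma mbe_unique (B : MatchingBookEmbedding G k) {v u1 u2 : V}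
    (h1 : G.Adj v u1) (h2 : G.Adj v u2)
    (hp : B.page ⟨s(v, u1), h1⟩ = B.page ⟨s(v, u2), h2⟩) : u1 = u2 := by
  by_contra hne
  have hef : (⟨s(v, u1), h1⟩ : G.edgeSet) ≠ ⟨s(v, u2), h2⟩ := by
    simp only [ne_eq, Subtype.mk.injEq, Sym2.congr_right]
    exact fun hq => hne (Sym2.congr_right.mp (congrArg Subtype.val hq))
  exact absurd (Sym2.mem_mk_left v u2)
    (B.matching _ _ hef hp v (Sym2.mem_mk_left v u1))

/-- In a `k`-regular graph, every vertex has exactly one edge on each page. -/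
lemma mbe_exists [DecidableRel G.Adj] (B : MatchingBookEmbedding G k)
    (hreg : G.IsRegularOfDegree k) (v : V) (p : Fin k) :
    ∃ u, ∃ h : G.Adj v u, B.page ⟨s(v, u), h⟩ = p := by
  let φ : G.neighborSet v → Fin k := fun u => B.page ⟨s(v, u.1), u.2⟩
  have hinj : Function.Injective φ := by
    intro u1 u2 h
    exact Subtype.ext (mbe_unique B u1.2 u2.2 h)
  have hcard : Fintype.card (G.neighborSet v) = Fintype.card (Fin k) := by
    simp [G.card_neighborSet_eq_degree, hreg v]
  obtain ⟨u, hu⟩ :=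
    ((Fintype.bijective_iff_injective_and_card φ).mpr ⟨hinj, hcard⟩).surjective p
  exact ⟨u.1, u.2, hu⟩

/-- The partner of a vertex lying between the endpoints of a same-page edge
also lies between them. -/
lemma mbe_between (B : MatchingBookEmbedding G k) {e f : G.edgeSet}
    (hp : B.page e = B.page f) {a b v w : V}
    (he : (e : Sym2 V) = s(a, b)) (hf : (f : Sym2 V) = s(v, w))
    (hv1 : B.ord a < B.ord v) (hv2 : B.ord v < B.ord b)
    (hwa : w ≠ a) (hwb : w ≠ b) :
    B.ord a < B.ord w ∧ B.ord w < B.ord b := by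
  have hwa' : B.ord w ≠ B.ord a := fun h => hwa (B.ord.injective h)
  have hwb' : B.ord w ≠ B.ord b := fun h => hwb (B.ord.injective h)
  rcases lt_trichotomy (B.ord w) (B.ord a) with h | h | h
  · exact absurd (B.noncross f e hp.symm w v a b (by rw [hf, Sym2.eq_swap]) he
      h hv1 hv2) (fun x => x)
  · exact absurd h hwa'
  rcases lt_trichotomy (B.ord w) (B.ord b) with h' | h' | h'
  · exact ⟨h, h'⟩
  · exact absurd h' hwb'
  · exact absurd (B.noncross e f hp a b v w he hf hv1 hv2 h') (fun x => x)

/-- Key parity lemma: the endpoints of any edge have spine positions of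
different parity. -/
lemma mbe_parity [DecidableRel G.Adj] (B : MatchingBookEmbedding G k)
    (hreg : G.IsRegularOfDegree k) {a b : V} (hadj : G.Adj a b)
    (hab : B.ord a < B.ord b) :
    (B.ord a : ℕ) % 2 ≠ (B.ord b : ℕ) % 2 := by
  set p := B.page ⟨s(a, b), hadj⟩ with hpdef
  set S : Finset V :=
    Finset.univ.filter (fun v => B.ord a < B.ord v ∧ B.ord v < B.ord b) with hS
  choose w hadjw hpw using fun v => mbe_exists B hreg v p
  -- the partner map is an involution
  have hww : ∀ v, w (w v) = v := by
    intro v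
    have h2 : B.page ⟨s(w v, v), (hadjw v).symm⟩ = p := by
      have : (⟨s(w v, v), (hadjw v).symm⟩ : G.edgeSet) = ⟨s(v, w v), hadjw v⟩ :=
        Subtype.ext (Sym2.eq_swap)
      rw [this]; exact hpw v
    exact mbe_unique B (hadjw (w v)) (hadjw v).symm (by rw [hpw (w v), h2])
  have hmem : ∀ v ∈ S, w v ∈ S := by
    intro v hv
    simp only [hS, Finset.mem_filter, Finset.mem_univ, true_and] at hv ⊢
    have hva : v ≠ a := fun h => absurd (h ▸ hv.1) (lt_irrefl _)
    have hvb : v ≠ b := fun h => absurd (h ▸ hv.2) (lt_irrefl _)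
    have hwa : w v ≠ a := by
      intro h
      have hef : (⟨s(a, b), hadj⟩ : G.edgeSet) ≠ ⟨s(v, w v), hadjw v⟩ := by
        intro hq
        have hq : s(a, b) = s(v, w v) := congrArg Subtype.val hq
        rw [Sym2.eq_iff] at hq
        rcases hq with ⟨h1, _⟩ | ⟨_, h2⟩
        · exact hva h1.symm
        · exact hvb h2.symm
      have := B.matching _ _ hef ((hpw v).symm) a (Sym2.mem_mk_left a b)
      exact this (h ▸ Sym2.mem_mk_right v (w v))
    have hwb : w v ≠ b := by
      intro h
      have hef : (⟨s(a, b), hadj⟩ : G.edgeSet) ≠ ⟨s(v, w v), hadjw v⟩ := by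
        intro hq
        have hq : s(a, b) = s(v, w v) := congrArg Subtype.val hq
        rw [Sym2.eq_iff] at hq
        rcases hq with ⟨h1, _⟩ | ⟨_, h2⟩
        · exact hva h1.symm
        · exact hvb h2.symm
      have := B.matching _ _ hef ((hpw v).symm) b (Sym2.mem_mk_right a b)
      exact this (h ▸ Sym2.mem_mk_right v (w v))
    exact mbe_between B ((hpw v).symm ▸ rfl : B.page ⟨s(a, b), hadj⟩ = B.page ⟨s(v, w v), hadjw v⟩)
      rfl rfl hv.1 hv.2 hwa hwb
  -- the involution has no fixed points, so `S.card` is even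
  have hsum : ∑ _x ∈ S, (1 : ZMod 2) = 0 := by
    refine Finset.sum_involution (fun v _ => w v) (fun v _ => by decide)
      (fun v _ _ => (hadjw v).ne') (fun v hv => hmem v hv) (fun v _ => hww v)
  have hcardS : (2 : ℕ) ∣ S.card := by
    rw [Finset.sum_const, nsmul_eq_mul, mul_one] at hsum
    exact (ZMod.natCast_eq_zero_iff _ _).mp hsum
  -- count `S`
  have hcount : S.card = (B.ord b : ℕ) - (B.ord a : ℕ) - 1 := by
    rw [← Fin.card_Ioo]
    apply Finset.card_bij (fun v _ => B.ord v)
    · intro v hv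
      simp only [hS, Finset.mem_filter, Finset.mem_univ, true_and] at hv
      exact Finset.mem_Ioo.mpr hv
    · intro v1 _ v2 _ h
      exact B.ord.injective h
    · intro j hj
      refine ⟨B.ord.symm j, ?_, by simp⟩
      simp only [hS, Finset.mem_filter, Finset.mem_univ, true_and,
        Equiv.apply_symm_apply]
      exact Finset.mem_Ioo.mp hj
  rw [hcount] at hcardS
  obtain ⟨m, hm⟩ := hcardS
  have hab' : (B.ord a : ℕ) < (B.ord b : ℕ) := hab
  omega

end Aux

/-- A regular dispersable graph is bipartite. -/
theorem stmt_2 {V : Type*} [Fintype V] (G : SimpleGraph V) [DecidableRel G.Adj]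
    (k : ℕ) (hreg : G.IsRegularOfDegree k)
    (hdisp : mbt G = G.maxDegree) (hk : G.maxDegree = k) :
    G.Colorable 2 := by
  rcases Nat.eq_zero_or_pos k with hk0 | hkpos
  · -- `k = 0`: no edges at all
    refine ⟨Coloring.mk (fun _ => 0) ?_⟩
    intro a b hab
    have h1 : 0 < G.degree a := (G.degree_pos_iff_exists_adj a).mpr ⟨b, hab⟩
    rw [hreg a, hk0] at h1
    exact absurd h1 (lt_irrefl 0)
  · -- `k ≥ 1`: get a matching book embedding with `k` pages
    have hmbt : mbt G = k := by rw [hdisp, hk]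
    have hne : {m | Nonempty (MatchingBookEmbedding G m)}.Nonempty := by
      by_contra h
      rw [Set.not_nonempty_iff_eq_empty] at h
      rw [mbt, h, Nat.sInf_empty] at hmbt
      omega
    have hkmem : k ∈ {m | Nonempty (MatchingBookEmbedding G m)} := by
      rw [← hmbt]
      exact Nat.sInf_mem hne
    obtain ⟨B⟩ := hkmem
    refine ⟨Coloring.mk (fun v => ⟨(B.ord v : ℕ) % 2, Nat.mod_lt _ (by omega)⟩) ?_⟩
    intro a b hab h
    have h2 : (B.ord a : ℕ) % 2 = (B.ord b : ℕ) % 2 := congrArg Fin.val h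
    rcases lt_or_gt_of_ne (fun hh : B.ord a = B.ord b =>
        hab.ne (B.ord.injective hh)) with hlt | hgt
    · exact mbe_parity B hreg hab hlt h2
    · exact mbe_parity B hreg hab.symm hgt h2.symm
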